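/- If g is continuous on a right-neighborhood of 0, differentiable at 0, and g(0) = 1, then the discrete-Markov throughput map r(x) = (P_on/θ)·log_e[(1 − p11·g(x))/((1 − p11 − p22)·g(x)² + p22·g(x))] is differentiable at 0 with r'(0) = −g'(0)/θ. -/

import Mathlib

open Real Set

/-- If `g` is continuous on a right-neighborhood of 0, differentiable
at 0 (from the right, with derivative `g'`), and `g 0 = 1`, then the discrete-Markov
throughput map
`r(x) = (P_on/θ)·log[(1 − p11·g(x))/((1 − p11 − p22)·g(x)² + p22·g(x))]`
is differentiable at 0 with `r'(0) = −g'(0)/θ`. -/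
theorem discrete_markov_throughput_first_derivative
    (θ p11 p22 : ℝ) (hθ : 0 < θ)
    (hp11 : p11 ∈ Set.Ico (0 : ℝ) 1) (hp22 : p22 ∈ Set.Icc (0 : ℝ) 1)
    (Pon : ℝ) (hPon : Pon = (1 - p11) / (2 - p11 - p22))
    (g : ℝ → ℝ) (g' : ℝ)
    (ε : ℝ) (hε : 0 < ε) (hgcont : ContinuousOn g (Set.Ico 0 ε))
    (hg0 : g 0 = 1)
    (hgderiv : HasDerivWithinAt g g' (Set.Ici 0) 0)
    (r : ℝ → ℝ)
    (hr : ∀ x, r x = (Pon / θ) * Real.log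
      ((1 - p11 * g x) / ((1 - p11 - p22) * (g x) ^ 2 + p22 * g x))) :
    HasDerivWithinAt r (-g' / θ) (Set.Ici 0) 0 := by
  obtain ⟨hp11a, hp11b⟩ := hp11
  obtain ⟨hp22a, hp22b⟩ := hp22
  have ha : (0:ℝ) < 1 - p11 := by linarith
  have hs : (0:ℝ) < 2 - p11 - p22 := by linarith
  have hθ' : θ ≠ 0 := ne_of_gt hθ
  set F : ℝ → ℝ := fun u => (Pon / θ) * Real.log
      ((1 - p11 * u) / ((1 - p11 - p22) * u ^ 2 + p22 * u)) with hFdef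
  set G : ℝ → ℝ := fun u => (Pon / θ) * (Real.log (1 - p11 * u)
      - Real.log ((1 - p11 - p22) * u ^ 2 + p22 * u)) with hGdef
  -- positivity near 1
  have hN1 : (0:ℝ) < 1 - p11 * 1 := by linarith
  have hD1 : (0:ℝ) < (1 - p11 - p22) * (1:ℝ) ^ 2 + p22 * 1 := by nlinarith
  have hN : ∀ᶠ u in nhds (1:ℝ), 0 < 1 - p11 * u := by
    have hc : ContinuousAt (fun u : ℝ => 1 - p11 * u) 1 := by fun_prop
    exact hc.eventually (eventually_gt_nhds hN1)
  have hD : ∀ᶠ u in nhds (1:ℝ), 0 < (1 - p11 - p22) * u ^ 2 + p22 * u := by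
    have hc : ContinuousAt (fun u : ℝ => (1 - p11 - p22) * u ^ 2 + p22 * u) 1 := by fun_prop
    exact hc.eventually (eventually_gt_nhds hD1)
  -- derivatives of numerator and denominator at 1
  have hN' : HasDerivAt (fun u : ℝ => 1 - p11 * u) (-p11) 1 := by
    simpa using ((hasDerivAt_id (1:ℝ)).const_mul p11).const_sub 1
  have hD' : HasDerivAt (fun u : ℝ => (1 - p11 - p22) * u ^ 2 + p22 * u)
      ((1 - p11 - p22) * 2 + p22) 1 := by
    have h1 : HasDerivAt (fun u : ℝ => u ^ 2) (2:ℝ) 1 := by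
      simpa using hasDerivAt_pow 2 (1:ℝ)
    have := (h1.const_mul (1 - p11 - p22)).add ((hasDerivAt_id (1:ℝ)).const_mul p22)
    simp only [mul_one] at this
    exact this
  have hG' : HasDerivAt G ((Pon / θ) * ((-p11) / (1 - p11 * 1)
      - ((1 - p11 - p22) * 2 + p22) / ((1 - p11 - p22) * (1:ℝ) ^ 2 + p22 * 1))) 1 := by
    exact ((hN'.log (ne_of_gt hN1)).sub (hD'.log (ne_of_gt hD1))).const_mul (Pon / θ)
  have hval : (Pon / θ) * ((-p11) / (1 - p11 * 1)
      - ((1 - p11 - p22) * 2 + p22) / ((1 - p11 - p22) * (1:ℝ) ^ 2 + p22 * 1)) = -1 / θ := by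
    subst hPon
    rw [show (1:ℝ) - p11 * 1 = 1 - p11 by ring,
        show (1 - p11 - p22) * (1:ℝ) ^ 2 + p22 * 1 = 1 - p11 by ring]
    field_simp
    ring
  rw [hval] at hG'
  have hFG : F =ᶠ[nhds (1:ℝ)] G := by
    filter_upwards [hN, hD] with u h1 h2
    simp only [hFdef, hGdef, Real.log_div (ne_of_gt h1) (ne_of_gt h2)]
  have hF' : HasDerivAt F (-1 / θ) 1 := hG'.congr_of_eventuallyEq hFG
  have hF2 : HasDerivAt F (-1 / θ) (g 0) := by rw [hg0]; exact hF'
  have hcomp := hF2.comp_hasDerivWithinAt 0 hgderiv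
  have hrF : r = F ∘ g := funext fun x => by simp [hr x, hFdef, Function.comp]
  rw [hrF]
  convert hcomp using 1
  · rfl
  · rfl
  ring
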